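/- Let M₀ = Σᵢ Eᵢ∧Eᵢ₊₁ ∈ so(n) and A = diag(a₁,…,aₙ). The component of the Hamiltonian vector field Q¹₂(M₀) = [M₀, P¹₂(M₀)] along Eᵢ∧Eᵢ₊₂, where P¹₂(M) = MA² + AMA + A²M, equals (aᵢ₊₂ - aᵢ)(aᵢ + aᵢ₊₁ + aᵢ₊₂). -/

import Mathlib

open Matrix

/-- The skew-symmetric tridiagonal matrix `M₀ = Σᵢ Eᵢ ∧ Eᵢ₊₁`. -/
def M0 (n : ℕ) : Matrix (Fin n) (Fin n) ℝ :=
  Matrix.of fun i j =>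
    if (i : ℕ) + 1 = (j : ℕ) then 1 else if (j : ℕ) + 1 = (i : ℕ) then -1 else 0

/-- The elementary skew-symmetric matrix `Eᵢ ∧ Eⱼ`: entry `+1` at `(i,j)` and
`-1` at `(j,i)`. -/
def wedge (n : ℕ) (i j : Fin n) : Matrix (Fin n) (Fin n) ℝ :=
  Matrix.single i j 1 - Matrix.single j i 1

/-- The gradient-type expression `P¹₂(M) = MA² + AMA + A²M`. -/
def P12 (n : ℕ) (a : Fin n → ℝ) : Matrix (Fin n) (Fin n) ℝ :=
  M0 n * Matrix.diagonal a * Matrix.diagonal a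
    + Matrix.diagonal a * M0 n * Matrix.diagonal a
    + Matrix.diagonal a * Matrix.diagonal a * M0 n

lemma M0_apply (n : ℕ) (i j : Fin n) : M0 n i j =
    if (i : ℕ) + 1 = (j : ℕ) then 1 else if (j : ℕ) + 1 = (i : ℕ) then -1 else 0 := rfl

lemma P12_apply (n : ℕ) (a : Fin n → ℝ) (i j : Fin n) :
    P12 n a i j = M0 n i j * (a i ^ 2 + a i * a j + a j ^ 2) := by
  simp [P12, Matrix.mul_apply, Matrix.diagonal_apply, Finset.mul_sum, Finset.sum_mul,
    Finset.sum_ite_eq, Finset.sum_ite_eq']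
  ring

lemma trace_mul_std (n : ℕ) (X : Matrix (Fin n) (Fin n) ℝ) (j k : Fin n) :
    Matrix.trace (X * Matrix.single j k 1) = X k j := by
  simp [Matrix.trace, Matrix.diag, Matrix.mul_apply, Matrix.single]
  rw [Finset.sum_comm]
  rw [Finset.sum_eq_single j]
  · rw [Finset.sum_eq_single k]
    · simp
    · intro b _ hb; simp [Ne.symm hb]
    · simp
  · intro b _ hb; apply Finset.sum_eq_zero; intro x _; simp [Ne.symm hb]
  · simp

/-- With `A = diag(a₁,…,aₙ)` and `P¹₂(M) = MA² + AMA + A²M`, the component of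
`Q¹₂(M₀) = [M₀, P¹₂(M₀)]` along `Eᵢ ∧ Eᵢ₊₂` with respect to the pairing
`⟨X,Y⟩ = -½tr(XY)` equals `(aᵢ₊₂ - aᵢ)(aᵢ + aᵢ₊₁ + aᵢ₊₂)`. -/
theorem component_Q12 (n : ℕ) (a : Fin n → ℝ) (i : ℕ) (h : i + 2 < n) :
    -(1 / 2 : ℝ) * Matrix.trace
      ((M0 n * P12 n a - P12 n a * M0 n) * wedge n ⟨i, by omega⟩ ⟨i + 2, h⟩) =
      (a ⟨i + 2, h⟩ - a ⟨i, by omega⟩) *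
        (a ⟨i, by omega⟩ + a ⟨i + 1, by omega⟩ + a ⟨i + 2, h⟩) := by
  have h0 : i < n := by omega
  have h1 : i + 1 < n := by omega
  set i0 : Fin n := ⟨i, h0⟩
  set i1 : Fin n := ⟨i + 1, h1⟩
  set i2 : Fin n := ⟨i + 2, h⟩
  rw [wedge, Matrix.mul_sub, Matrix.trace_sub, trace_mul_std, trace_mul_std]
  have e1 : (M0 n * P12 n a) i0 i2 = a i1 ^ 2 + a i1 * a i2 + a i2 ^ 2 := by
    rw [Matrix.mul_apply, Finset.sum_eq_single i1]
    · simp [M0_apply, P12_apply, i0, i1, i2]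
      try { intro hh; omega }
    · intro b _ hb
      have hb' : (b : ℕ) ≠ i + 1 := fun hh => hb (Fin.ext hh)
      simp only [M0_apply, P12_apply, i0, i1, i2]
      split_ifs <;> simp_all <;> omega
    · simp
  have e2 : (P12 n a * M0 n) i0 i2 = a i0 ^ 2 + a i0 * a i1 + a i1 ^ 2 := by
    rw [Matrix.mul_apply, Finset.sum_eq_single i1]
    · simp [M0_apply, P12_apply, i0, i1, i2]
      try { intro hh; omega }
    · intro b _ hb
      have hb' : (b : ℕ) ≠ i + 1 := fun hh => hb (Fin.ext hh)
      simp only [M0_apply, P12_apply, i0, i1, i2]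
      split_ifs <;> simp_all <;> omega
    · simp
  have e3 : (M0 n * P12 n a) i2 i0 = a i1 ^ 2 + a i1 * a i0 + a i0 ^ 2 := by
    rw [Matrix.mul_apply, Finset.sum_eq_single i1]
    · simp [M0_apply, P12_apply, i0, i1, i2]
      try { intro hh; omega }
    · intro b _ hb
      have hb' : (b : ℕ) ≠ i + 1 := fun hh => hb (Fin.ext hh)
      simp only [M0_apply, P12_apply, i0, i1, i2]
      split_ifs <;> simp_all <;> omega
    · simp
  have e4 : (P12 n a * M0 n) i2 i0 = a i2 ^ 2 + a i2 * a i1 + a i1 ^ 2 := by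
    rw [Matrix.mul_apply, Finset.sum_eq_single i1]
    · simp [M0_apply, P12_apply, i0, i1, i2]
      try { intro hh; omega }
    · intro b _ hb
      have hb' : (b : ℕ) ≠ i + 1 := fun hh => hb (Fin.ext hh)
      simp only [M0_apply, P12_apply, i0, i1, i2]
      split_ifs <;> simp_all <;> omega
    · simp
  simp only [Matrix.sub_apply, e1, e2, e3, e4]
  ring
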